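/- Let Q be the contact-rate matrix of the path on n > 1 nodes (q_{i,i+1} = q_{i+1,i} = 1 for 1 ≤ i ≤ n−1, all other entries 0). For every integer k with 1 ≤ k < n, the maximum over subsets S ⊆ V with |S| = k of the largest eigenvalue of Q_S equals −2(1 − cos(π/(2(n−k)+1))). In particular, for α ∈ (1/2,1) with (2α−1)n an integer, δ(Q,α) = 2(1 − cos(π/(4(1−α)n+1))). -/

import Mathlib

open Matrix Finset Real

/-- The matrix `Q_S`. -/
noncomputable def QS {n : ℕ} (Q : Matrix (Fin n) (Fin n) ℝ) (S : Finset (Fin n)) :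
    Matrix (Fin n) (Fin n) ℝ :=
  fun i j => if i = j then -(∑ l, Q i l) else if i ∈ S then 0 else Q i j

/-- The largest (real) eigenvalue of a matrix. -/
noncomputable def lambdaMax {n : ℕ} (M : Matrix (Fin n) (Fin n) ℝ) : ℝ :=
  sSup {μ : ℝ | ∃ x : Fin n → ℝ, x ≠ 0 ∧ M.mulVec x = μ • x}

/-- The contact rate matrix of the path on `n` nodes: `q_{i,i+1} = q_{i+1,i} = 1`. -/
noncomputable def Qpath (n : ℕ) : Matrix (Fin n) (Fin n) ℝ :=
  fun i j => if (i : ℕ) + 1 = (j : ℕ) ∨ (j : ℕ) + 1 = (i : ℕ) then 1 else 0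


noncomputable def cst (m : ℕ) : ℝ := 2 * (1 - Real.cos (Real.pi / (2 * m + 1)))

lemma theta_pos (m : ℕ) : 0 < Real.pi / (2 * m + 1) := by
  apply div_pos Real.pi_pos; positivity

lemma theta_le (m : ℕ) : Real.pi / (2 * m + 1) ≤ Real.pi := by
  apply div_le_self Real.pi_pos.le; push_cast; nlinarith [Nat.cast_nonneg (α := ℝ) m]

lemma cst_nonneg (m : ℕ) : 0 ≤ cst m := by
  have := Real.cos_le_one (Real.pi / (2 * m + 1)); unfold cst; linarith

lemma cst_mono {l m : ℕ} (h : l ≤ m) : cst m ≤ cst l := by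
  unfold cst
  have h1 : Real.pi / (2 * m + 1) ≤ Real.pi / (2 * l + 1) := by
    apply div_le_div_of_nonneg_left Real.pi_pos.le (by positivity)
    push_cast; linarith [(Nat.cast_le (α := ℝ)).mpr h]
  have := Real.cos_le_cos_of_nonneg_of_le_pi (theta_pos m).le (theta_le l) h1
  linarith

lemma cst_le_one {m : ℕ} (hm : 1 ≤ m) : cst m ≤ 1 := by
  have h1 : Real.pi / (2 * m + 1) ≤ Real.pi / 3 := by
    apply div_le_div_of_nonneg_left Real.pi_pos.le (by norm_num)
    have : (1:ℝ) ≤ (m:ℝ) := by exact_mod_cast hm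
    linarith
  have h2 := Real.cos_le_cos_of_nonneg_of_le_pi (by positivity) (by linarith [Real.pi_pos] : Real.pi/3 ≤ Real.pi) h1
  rw [Real.cos_pi_div_three] at h2
  unfold cst; linarith

lemma cst_pos (m : ℕ) : 0 < cst m := by
  have h1 : Real.cos (Real.pi / (2 * m + 1)) < 1 := by
    have := Real.cos_lt_cos_of_nonneg_of_le_pi le_rfl (theta_le m) (theta_pos m)
    simpa using this
  unfold cst; linarith



lemma run_right (ℓ : ℕ) (y : ℕ → ℝ) (hy : y ℓ = 0) :
    cst ℓ * ∑ i ∈ range ℓ, (y i)^2 ≤ ∑ i ∈ range ℓ, (y i - y (i+1))^2 := by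
  rcases Nat.eq_zero_or_pos ℓ with h0 | hl
  · subst h0; simp
  set θ := Real.pi / (2 * ℓ + 1) with hθ
  have hθpos : 0 < θ := by rw [hθ]; positivity
  have hθle : θ ≤ Real.pi / 3 := by
    rw [hθ]
    apply div_le_div_of_nonneg_left Real.pi_pos.le (by norm_num)
    have : (1:ℝ) ≤ (ℓ:ℝ) := by exact_mod_cast hl
    linarith
  have hhalf : ((ℓ:ℝ) + 1/2) * θ = Real.pi / 2 := by
    rw [hθ]; field_simp
  have hcospos : ∀ x : ℝ, 0 ≤ x → x < Real.pi / 2 → 0 < Real.cos x := fun x h1 h2 =>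
    Real.cos_pos_of_mem_Ioo ⟨by linarith [Real.pi_pos], h2⟩
  have hcosnn : ∀ x : ℝ, 0 ≤ x → x ≤ Real.pi / 2 → 0 ≤ Real.cos x := fun x h1 h2 =>
    Real.cos_nonneg_of_mem_Icc ⟨by linarith [Real.pi_pos], h2⟩
  have hrec : ∀ a : ℝ, Real.cos (a - θ) + Real.cos (a + θ) = 2 * Real.cos θ * Real.cos a := by
    intro a; rw [Real.cos_sub, Real.cos_add]; ring
  have hc : cst ℓ = 2 - 2 * Real.cos θ := by rw [cst, hθ]; ring
  have hphipos : ∀ i : ℕ, i < ℓ → 0 < Real.cos (((i:ℝ)+1/2)*θ) := by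
    intro i hi
    apply hcospos _ (by positivity)
    rw [← hhalf]
    have : (i:ℝ) + 1/2 < (ℓ:ℝ) + 1/2 := by
      have : (i:ℝ) < ℓ := by exact_mod_cast hi
      linarith
    nlinarith
  set D : ℕ → ℝ := fun i => (y i)^2 * (1 - Real.cos (((i:ℝ) - 1/2) * θ) / Real.cos (((i:ℝ) + 1/2) * θ)) with hD
  set N : ℕ → ℝ := fun i => (Real.cos (((i:ℝ)+3/2)*θ) * y i - Real.cos (((i:ℝ)+1/2)*θ) * y (i+1))^2 /
      (Real.cos (((i:ℝ)+1/2)*θ) * Real.cos (((i:ℝ)+3/2)*θ)) with hN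
  have key : ∀ i, i < ℓ → (y i - y (i+1))^2 - cst ℓ * (y i)^2 = N i + (D (i+1) - D i) := by
    intro i hi
    have e1 : (((i+1:ℕ):ℝ) - 1/2) * θ = ((i:ℝ) + 1/2)*θ := by push_cast; ring
    have e2 : (((i+1:ℕ):ℝ) + 1/2) * θ = ((i:ℝ) + 3/2)*θ := by push_cast; ring
    have hab : Real.cos (((i:ℝ)-1/2)*θ) + Real.cos (((i:ℝ)+3/2)*θ)
        = 2 * Real.cos θ * Real.cos (((i:ℝ)+1/2)*θ) := by
      have := hrec (((i:ℝ)+1/2)*θ)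
      rw [show ((i:ℝ)+1/2)*θ - θ = ((i:ℝ)-1/2)*θ by ring,
          show ((i:ℝ)+1/2)*θ + θ = ((i:ℝ)+3/2)*θ by ring] at this
      exact this
    have ha : 0 < Real.cos (((i:ℝ)+1/2)*θ) := hphipos i hi
    rw [hc]
    simp only [hN, hD]
    rw [e1, e2]
    by_cases hi1 : i + 1 < ℓ
    · have hb : 0 < Real.cos (((i:ℝ)+3/2)*θ) := by
        apply hcospos _ (by positivity)
        rw [← hhalf]
        have : ((i:ℝ) + 1) < ℓ := by exact_mod_cast hi1
        nlinarith
      set a := Real.cos (((i:ℝ)+1/2)*θ) with hA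
      set b := Real.cos (((i:ℝ)+3/2)*θ) with hB
      set p := Real.cos (((i:ℝ)-1/2)*θ) with hP
      clear_value a b p
      rw [show p = 2 * Real.cos θ * a - b by linarith]
      field_simp
      ring
    · have hiℓ : i + 1 = ℓ := by omega
      have hb0 : Real.cos (((i:ℝ)+3/2)*θ) = 0 := by
        rw [show ((i:ℝ)+3/2)*θ = ((ℓ:ℝ)+1/2)*θ by
          rw [show (ℓ:ℝ) = ((i:ℝ)+1) by exact_mod_cast congrArg (Nat.cast : ℕ → ℝ) hiℓ.symm]; ring,
          hhalf]
        exact Real.cos_pi_div_two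
      have hy1 : y (i+1) = 0 := by rw [hiℓ]; exact hy
      rw [hb0, hy1]
      set a := Real.cos (((i:ℝ)+1/2)*θ) with hA
      set p := Real.cos (((i:ℝ)-1/2)*θ) with hP
      clear_value a p
      have hpa : p = 2 * Real.cos θ * a := by linarith
      rw [hpa]
      field_simp
      ring
  have hD0 : D 0 = 0 := by
    have hpos : 0 < Real.cos ((((0:ℕ):ℝ) + 1/2) * θ) := by
      apply hcospos _ (by positivity)
      push_cast
      nlinarith [Real.pi_pos]
    simp only [hD]
    rw [show ((((0:ℕ):ℝ)) - 1/2) * θ = -(((((0:ℕ):ℝ)) + 1/2) * θ) by push_cast; ring, Real.cos_neg]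
    rw [div_self (ne_of_gt hpos)]
    ring
  have hDl : D ℓ = 0 := by simp only [hD]; rw [hy]; ring
  have hNnn : ∀ i ∈ range ℓ, 0 ≤ N i := by
    intro i hi'
    have hi : i < ℓ := mem_range.mp hi'
    simp only [hN]
    apply div_nonneg (sq_nonneg _)
    apply mul_nonneg (hphipos i hi).le
    apply hcosnn _ (by positivity)
    rw [← hhalf]
    have : (i:ℝ) + 1 ≤ (ℓ:ℝ) := by exact_mod_cast hi
    nlinarith
  have hsum : ∑ i ∈ range ℓ, ((y i - y (i+1))^2 - cst ℓ * (y i)^2)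
      = ∑ i ∈ range ℓ, N i + (D ℓ - D 0) := by
    rw [Finset.sum_congr rfl (fun i hi' => key i (mem_range.mp hi')), Finset.sum_add_distrib,
      Finset.sum_range_sub (fun i => D i)]
  rw [Finset.sum_sub_distrib, ← Finset.mul_sum] at hsum
  have : 0 ≤ ∑ i ∈ range ℓ, N i := Finset.sum_nonneg hNnn
  rw [hD0, hDl] at hsum
  linarith




lemma run_left (ℓ a : ℕ) (y : ℕ → ℝ) (hy : y a = 0) :
    cst ℓ * ∑ i ∈ range ℓ, (y (a+1+i))^2 ≤ ∑ i ∈ range ℓ, (y (a+i) - y (a+i+1))^2 := by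
  have h := run_right ℓ (fun i => y (a + ℓ - i)) (by simpa using hy)
  have h1 : ∑ i ∈ range ℓ, (y (a + ℓ - i))^2 = ∑ i ∈ range ℓ, (y (a+1+i))^2 := by
    rw [← Finset.sum_range_reflect (fun i => (y (a+1+i))^2) ℓ]
    apply Finset.sum_congr rfl
    intro i hi
    have hi' := mem_range.mp hi
    congr 2
    omega
  have h2 : ∑ i ∈ range ℓ, ((fun i => y (a + ℓ - i)) i - (fun i => y (a + ℓ - i)) (i+1))^2
      = ∑ i ∈ range ℓ, (y (a+i) - y (a+i+1))^2 := by
    rw [← Finset.sum_range_reflect (fun i => (y (a+i) - y (a+i+1))^2) ℓ]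
    apply Finset.sum_congr rfl
    intro i hi
    have hi' := mem_range.mp hi
    simp only
    rw [show a + ℓ - i = a + (ℓ - 1 - i) + 1 by omega, show a + ℓ - (i+1) = a + (ℓ - 1 - i) by omega]
    ring
  rw [h1, h2] at h
  exact h

lemma main_ineq (m : ℕ) : ∀ n, ∀ x : ℕ → ℝ, (∃ j, j < n ∧ x j = 0) →
    ((range n).filter (fun i => x i ≠ 0)).card ≤ m →
    cst m * ∑ i ∈ range n, (x i)^2 ≤ ∑ i ∈ range (n-1), (x i - x (i+1))^2 := by
  intro n
  induction n using Nat.strong_induction_on with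
  | _ n IH =>
    intro x hz hc
    rcases hz with ⟨j0, hj0n, hx0⟩
    have hn1 : 1 ≤ n := by omega
    set Z := (range n).filter (fun i => x i = 0) with hZ
    have hZne : Z.Nonempty := ⟨j0, by simp [hZ, mem_filter, mem_range]; exact ⟨hj0n, hx0⟩⟩
    set j := Z.max' hZne with hj
    have hjZ : j ∈ Z := Z.max'_mem hZne
    have hjn : j < n := by have := (mem_filter.mp hjZ).1; exact mem_range.mp this
    have hxj : x j = 0 := (mem_filter.mp hjZ).2
    have hmax : ∀ i, j < i → i < n → x i ≠ 0 := by
      intro i hji hin hxi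
      have : i ∈ Z := by simp [hZ, mem_filter, mem_range]; exact ⟨hin, hxi⟩
      have := Z.le_max' i this
      omega
    set r := n - 1 - j with hr
    rcases Nat.eq_zero_or_pos r with hr0 | hrpos
    · -- j = n - 1
      have hjn1 : j = n - 1 := by omega
      by_cases hz' : ∃ j', j' < n - 1 ∧ x j' = 0
      · have hIH := IH (n-1) (by omega) x hz' (by
          apply le_trans _ hc
          apply Finset.card_le_card
          apply Finset.filter_subset_filter
          apply Finset.range_subset_range.mpr; omega)
        have hsx : ∑ i ∈ range n, (x i)^2 = ∑ i ∈ range (n-1), (x i)^2 := by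
          rw [show n = (n-1)+1 by omega, Finset.sum_range_succ]
          rw [show n - 1 = j from hjn1.symm, hxj]
          simp
        have hse : ∑ i ∈ range (n-1-1), (x i - x (i+1))^2 ≤ ∑ i ∈ range (n-1), (x i - x (i+1))^2 := by
          apply Finset.sum_le_sum_of_subset_of_nonneg
          · apply Finset.range_subset_range.mpr; omega
          · intros; positivity
        rw [hsx]
        linarith
      · push_neg at hz'
        have hall : ∀ i ∈ range (n-1), x i ≠ 0 := by
          intro i hi
          exact hz' i (mem_range.mp hi)
        have hcard : n - 1 ≤ m := by
          calc n - 1 = (range (n-1)).card := by simp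
          _ ≤ ((range n).filter (fun i => x i ≠ 0)).card := by
              apply Finset.card_le_card
              intro i hi
              rw [mem_filter, mem_range]
              exact ⟨by have := mem_range.mp hi; omega, hall i hi⟩
          _ ≤ m := hc
        have hrun := run_right (n-1) x (by rw [← hjn1]; exact hxj)
        have hsx : ∑ i ∈ range n, (x i)^2 = ∑ i ∈ range (n-1), (x i)^2 := by
          rw [show n = (n-1)+1 by omega, Finset.sum_range_succ]
          rw [show n - 1 = j from hjn1.symm, hxj]
          simp
        rw [hsx]
        calc cst m * ∑ i ∈ range (n-1), (x i)^2
            ≤ cst (n-1) * ∑ i ∈ range (n-1), (x i)^2 := by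
              apply mul_le_mul_of_nonneg_right (cst_mono hcard)
              positivity
          _ ≤ _ := hrun
    · -- r ≥ 1, run (j, n-1], recurse on [0, j+1)
      have hn : n = j + 1 + r := by omega
      have hIH := IH (j+1) (by omega) x ⟨j, by omega, hxj⟩ (by
        apply le_trans _ hc
        apply Finset.card_le_card
        apply Finset.filter_subset_filter
        apply Finset.range_subset_range.mpr; omega)
      have hrm : r ≤ m := by
        calc r = (Finset.Ico (j+1) n).card := by rw [Nat.card_Ico]; omega
        _ ≤ ((range n).filter (fun i => x i ≠ 0)).card := by
            apply Finset.card_le_card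
            intro i hi
            rw [Finset.mem_Ico] at hi
            rw [mem_filter, mem_range]
            exact ⟨hi.2, hmax i (by omega) hi.2⟩
        _ ≤ m := hc
      have hrun := run_left r j x hxj
      have hsx : ∑ i ∈ range n, (x i)^2
          = ∑ i ∈ range (j+1), (x i)^2 + ∑ i ∈ range r, (x (j+1+i))^2 := by
        rw [hn, Finset.sum_range_add]
      have hse : ∑ i ∈ range (n-1), (x i - x (i+1))^2
          = ∑ i ∈ range j, (x i - x (i+1))^2 + ∑ i ∈ range r, (x (j+i) - x (j+i+1))^2 := by
        rw [show n - 1 = j + r by omega, Finset.sum_range_add]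
      have hB : (0:ℝ) ≤ ∑ i ∈ range r, (x (j+1+i))^2 := by positivity
      have h2 : cst m * ∑ i ∈ range r, (x (j+1+i))^2 ≤ ∑ i ∈ range r, (x (j+i) - x (j+i+1))^2 :=
        le_trans (mul_le_mul_of_nonneg_right (cst_mono hrm) hB) hrun
      have hj1 : ∑ i ∈ range (j+1-1), (x i - x (i+1))^2 = ∑ i ∈ range j, (x i - x (i+1))^2 := by
        congr 1
      rw [hj1] at hIH
      rw [hsx, hse, mul_add]
      linarith




noncomputable def extv {n : ℕ} (x : Fin n → ℝ) : ℕ → ℝ := fun i => if h : i < n then x ⟨i, h⟩ else 0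

lemma qpath_row (n : ℕ) (i : Fin n) (g : Fin n → ℝ) :
    ∑ j, Qpath n i j * g j = extv g ((i:ℕ)+1) + (if 0 < (i:ℕ) then extv g ((i:ℕ)-1) else 0) := by
  have split : ∀ j : Fin n, Qpath n i j * g j
      = (if ((i:ℕ)+1 = (j:ℕ)) then g j else 0) + (if ((j:ℕ)+1 = (i:ℕ)) then g j else 0) := by
    intro j; unfold Qpath
    by_cases h1 : (i:ℕ)+1 = (j:ℕ) <;> by_cases h2 : (j:ℕ)+1 = (i:ℕ)
    · omega
    all_goals simp [h1, h2]
  rw [Finset.sum_congr rfl (fun j _ => split j), Finset.sum_add_distrib]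
  congr 1
  · by_cases h : (i:ℕ)+1 < n
    · have e : ∀ j : Fin n, (if ((i:ℕ)+1 = (j:ℕ)) then g j else 0)
          = (if j = (⟨(i:ℕ)+1, h⟩ : Fin n) then g j else 0) := by
        intro j
        by_cases hj : ((i:ℕ)+1 = (j:ℕ))
        · rw [if_pos hj, if_pos (Fin.ext hj.symm)]
        · rw [if_neg hj, if_neg (fun hh => hj (by rw [hh]))]
      rw [Finset.sum_congr rfl (fun j _ => e j), Finset.sum_ite_eq' univ _ g]
      simp [extv, h]
    · rw [extv, dif_neg h]
      apply Finset.sum_eq_zero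
      intro j _
      rw [if_neg]
      have := j.isLt
      omega
  · by_cases h0 : 0 < (i:ℕ)
    · rw [if_pos h0]
      have hlt : (i:ℕ)-1 < n := by have := i.isLt; omega
      have e : ∀ j : Fin n, (if ((j:ℕ)+1 = (i:ℕ)) then g j else 0)
          = (if j = (⟨(i:ℕ)-1, hlt⟩ : Fin n) then g j else 0) := by
        intro j
        by_cases hj : ((j:ℕ)+1 = (i:ℕ))
        · rw [if_pos hj, if_pos (Fin.ext (by simp; omega))]
        · rw [if_neg hj, if_neg (fun hh => hj (by rw [hh]; simp; omega))]
      rw [Finset.sum_congr rfl (fun j _ => e j), Finset.sum_ite_eq' univ _ g]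
      simp [extv, hlt]
    · rw [if_neg h0]
      apply Finset.sum_eq_zero
      intro j _
      rw [if_neg]
      omega

lemma qpath_deg (n : ℕ) (i : Fin n) :
    ∑ l, Qpath n i l = (if (i:ℕ)+1 < n then (1:ℝ) else 0) + (if 0 < (i:ℕ) then (1:ℝ) else 0) := by
  have h := qpath_row n i (fun _ => 1)
  simp only [mul_one] at h
  rw [h]
  have h1 : extv (n := n) (fun _ => (1:ℝ)) ((i:ℕ)+1) = if (i:ℕ)+1 < n then (1:ℝ) else 0 := by
    simp only [extv]; split <;> simp_all
  have h2 : extv (n := n) (fun _ => (1:ℝ)) ((i:ℕ)-1) = 1 := by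
    have hlt : (i:ℕ)-1 < n := by have := i.isLt; omega
    simp [extv, hlt]
  rw [h1, h2]

lemma QS_row (n : ℕ) (S : Finset (Fin n)) (i : Fin n) (x : Fin n → ℝ) :
    ((QS (Qpath n) S).mulVec x) i = if i ∈ S then -(∑ l, Qpath n i l) * x i
      else -(∑ l, Qpath n i l) * x i + (extv x ((i:ℕ)+1) + (if 0 < (i:ℕ) then extv x ((i:ℕ)-1) else 0)) := by
  have hmv : ((QS (Qpath n) S).mulVec x) i = ∑ j, QS (Qpath n) S i j * x j := by
    simp [Matrix.mulVec, dotProduct]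
  rw [hmv]
  by_cases hiS : i ∈ S
  · rw [if_pos hiS]
    rw [Finset.sum_eq_single_of_mem i (mem_univ i)]
    · simp [QS]
    · intro j _ hji
      have : ¬ (i = j) := fun h => hji h.symm
      simp [QS, this, hiS]
  · rw [if_neg hiS]
    have e : ∀ j : Fin n, QS (Qpath n) S i j * x j
        = (if i = j then (-(∑ l, Qpath n i l) * x i - Qpath n i j * x j) else 0) + Qpath n i j * x j := by
      intro j
      by_cases h : i = j
      · subst h; simp [QS]; try ring
      · simp [QS, h, hiS]
    rw [Finset.sum_congr rfl (fun j _ => e j), Finset.sum_add_distrib, Finset.sum_ite_eq univ i _]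
    have hQii : Qpath n i i = 0 := by simp [Qpath]
    rw [qpath_row]
    simp [hQii]



lemma sum_id (n : ℕ) (X : ℕ → ℝ) (hX : ∀ j, n ≤ j → X j = 0) :
    ∑ i ∈ range n, (X i * X (i+1) + (if 0 < i then X i * X (i-1) else 0)
      - (if i+1 < n then X i^2 else 0) - (if 0 < i then X i^2 else 0))
    = -∑ i ∈ range (n-1), (X i - X (i+1))^2 := by
  rcases Nat.eq_zero_or_pos n with h0 | hn
  · subst h0; simp
  have S1 : ∑ i ∈ range n, X i * X (i+1) = ∑ i ∈ range (n-1), X i * X (i+1) := by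
    rw [show n = (n-1)+1 by omega, Finset.sum_range_succ]
    rw [hX ((n-1)+1) (by omega)]
    simp
  have S2 : ∑ i ∈ range n, (if 0 < i then X i * X (i-1) else 0)
      = ∑ i ∈ range (n-1), X (i+1) * X i := by
    rw [show n = (n-1)+1 by omega, Finset.sum_range_succ']
    simp
  have S3 : ∑ i ∈ range n, (if i+1 < n then X i^2 else 0) = ∑ i ∈ range (n-1), X i^2 := by
    rw [← Finset.sum_subset (Finset.range_subset_range.mpr (by omega : n-1 ≤ n))]
    · apply Finset.sum_congr rfl
      intro i hi
      rw [if_pos (by have := mem_range.mp hi; omega)]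
    · intro i hi hni
      rw [if_neg (by have := mem_range.mp hi; have : ¬ (i < n - 1) := fun h => hni (mem_range.mpr h); omega)]
  have S4 : ∑ i ∈ range n, (if 0 < i then X i^2 else 0) = ∑ i ∈ range (n-1), X (i+1)^2 := by
    rw [show n = (n-1)+1 by omega, Finset.sum_range_succ']
    simp
  rw [Finset.sum_sub_distrib, Finset.sum_sub_distrib, Finset.sum_add_distrib, S1, S2, S3, S4]
  rw [← Finset.sum_neg_distrib]
  rw [← Finset.sum_add_distrib, ← Finset.sum_sub_distrib, ← Finset.sum_sub_distrib]
  apply Finset.sum_congr rfl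
  intro i _
  ring






lemma eig_le (n : ℕ) (hn : 2 ≤ n) (S : Finset (Fin n)) (hk1 : 1 ≤ S.card) (hkn : S.card < n)
    (μ : ℝ) (hμ : ∃ x : Fin n → ℝ, x ≠ 0 ∧ (QS (Qpath n) S).mulVec x = μ • x) :
    μ ≤ -(cst (n - S.card)) := by
  obtain ⟨x, hx0, hxe⟩ := hμ
  have hrow : ∀ i, ((QS (Qpath n) S).mulVec x) i = μ * x i := by
    intro i; rw [hxe]; simp
  set m := n - S.card with hm
  have hm1 : 1 ≤ m := by omega
  by_cases hA : ∃ i ∈ S, x i ≠ 0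
  · obtain ⟨i, hiS, hxi⟩ := hA
    have h1 := hrow i
    rw [QS_row, if_pos hiS] at h1
    have hdeg : (1:ℝ) ≤ ∑ l, Qpath n i l := by
      rw [qpath_deg]
      by_cases h0 : 0 < (i:ℕ)
      · rw [if_pos h0]
        have : (0:ℝ) ≤ (if (i:ℕ)+1 < n then (1:ℝ) else 0) := by positivity
        linarith
      · have : (i:ℕ) = 0 := by omega
        rw [if_pos (by omega), if_neg h0]
        norm_num
    have hμval : μ = -(∑ l, Qpath n i l) := (mul_right_cancel₀ hxi h1).symm
    have := cst_le_one hm1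
    rw [hμval]
    linarith
  · push_neg at hA
    set X := extv x with hXdef
    have hXzero : ∀ j, n ≤ j → X j = 0 := by
      intro j hj; simp only [hXdef, extv]; rw [dif_neg (by omega)]
    have hXval : ∀ i : Fin n, X (i:ℕ) = x i := by
      intro i; simp only [hXdef, extv]; rw [dif_pos i.isLt]
    have claim1 : ∀ i : Fin n, x i * (((QS (Qpath n) S).mulVec x) i) =
        X (i:ℕ) * X ((i:ℕ)+1) + (if 0 < (i:ℕ) then X (i:ℕ) * X ((i:ℕ)-1) else 0)
        - (if (i:ℕ)+1 < n then X (i:ℕ)^2 else 0) - (if 0 < (i:ℕ) then X (i:ℕ)^2 else 0) := by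
      intro i
      rw [QS_row, hXval i]
      by_cases hiS : i ∈ S
      · rw [if_pos hiS]
        have hxi : x i = 0 := hA i hiS
        rw [hxi]
        have hXi : X (i:ℕ) = 0 := by rw [hXval i, hxi]
        simp [hXi]
      · rw [if_neg hiS, qpath_deg]
        have e1 : extv x ((i:ℕ)+1) = X ((i:ℕ)+1) := rfl
        have e2 : extv x ((i:ℕ)-1) = X ((i:ℕ)-1) := rfl
        rw [e1, e2]
        by_cases h1 : (i:ℕ)+1 < n <;> by_cases h2 : 0 < (i:ℕ) <;>
          simp only [if_pos, if_neg, h1, h2, if_true, if_false] <;> ring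
    have hsum1 : ∑ i : Fin n, x i * (((QS (Qpath n) S).mulVec x) i)
        = -∑ i ∈ range (n-1), (X i - X (i+1))^2 := by
      rw [Finset.sum_congr rfl (fun i _ => claim1 i)]
      rw [Fin.sum_univ_eq_sum_range (fun i => X i * X (i+1) + (if 0 < i then X i * X (i-1) else 0)
        - (if i+1 < n then X i^2 else 0) - (if 0 < i then X i^2 else 0)) n]
      exact sum_id n X hXzero
    have hsum2 : ∑ i : Fin n, x i * (((QS (Qpath n) S).mulVec x) i) = μ * ∑ i ∈ range n, (X i)^2 := by
      rw [Finset.sum_congr rfl (fun i (_ : i ∈ univ) => by rw [hrow i])]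
      rw [show ∑ i : Fin n, x i * (μ * x i) = μ * ∑ i : Fin n, (X (i:ℕ))^2 by
        rw [Finset.mul_sum]; apply Finset.sum_congr rfl; intro i _; rw [hXval i]; ring]
      rw [Fin.sum_univ_eq_sum_range (fun i => (X i)^2) n]
    -- zeros of X : at least S.card many
    obtain ⟨j, hjS⟩ := Finset.card_pos.mp (by omega : 0 < S.card)
    have hcount : ((range n).filter (fun i => X i ≠ 0)).card ≤ m := by
      have hsub : (range n).filter (fun i => X i ≠ 0) ⊆ (range n) \ S.image Fin.val := by
        intro i hi
        rw [mem_filter] at hi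
        rw [Finset.mem_sdiff]
        refine ⟨hi.1, fun hmem => ?_⟩
        rw [Finset.mem_image] at hmem
        obtain ⟨a, haS, hav⟩ := hmem
        apply hi.2
        rw [← hav, hXval a]
        exact hA a haS
      calc ((range n).filter (fun i => X i ≠ 0)).card
          ≤ ((range n) \ S.image Fin.val).card := Finset.card_le_card hsub
        _ = n - S.card := by
            have himg : S.image Fin.val ⊆ range n := by
              intro a ha
              rw [Finset.mem_image] at ha
              obtain ⟨b, _, hb⟩ := ha
              rw [mem_range, ← hb]
              exact b.isLt
            rw [Finset.card_sdiff_of_subset himg,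
              Finset.card_image_of_injective S Fin.val_injective, Finset.card_range]
    have hmain := main_ineq m n X ⟨(j:ℕ), j.isLt, by rw [hXval j]; exact hA j hjS⟩ hcount
    have hT : 0 < ∑ i ∈ range n, (X i)^2 := by
      obtain ⟨i, hi⟩ := Function.ne_iff.mp hx0
      have hXi : X (i:ℕ) ≠ 0 := by rw [hXval i]; simpa using hi
      have h1 : (0:ℝ) < X (i:ℕ)^2 := by positivity
      have h2 : X (i:ℕ)^2 ≤ ∑ i ∈ range n, (X i)^2 :=
        Finset.single_le_sum (fun i _ => sq_nonneg (X i)) (mem_range.mpr i.isLt)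
      linarith
    have hfin : μ * ∑ i ∈ range n, (X i)^2 ≤ (-(cst m)) * ∑ i ∈ range n, (X i)^2 := by
      rw [← hsum2, hsum1]
      linarith
    exact le_of_mul_le_mul_right hfin hT




lemma eig_nonempty (n : ℕ) (S : Finset (Fin n)) (hkn : S.card < n) :
    {μ : ℝ | ∃ x : Fin n → ℝ, x ≠ 0 ∧ (QS (Qpath n) S).mulVec x = μ • x}.Nonempty := by
  classical
  set A : Matrix ↥(Sᶜ) ↥(Sᶜ) ℝ := fun p q => QS (Qpath n) S (↑p) (↑q) with hAdef
  have hsym : ∀ p q : ↥(Sᶜ), A p q = A q p := by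
    intro p q
    have hp : (↑p : Fin n) ∉ S := Finset.mem_compl.mp p.2
    have hq : (↑q : Fin n) ∉ S := Finset.mem_compl.mp q.2
    by_cases hpq : (↑p : Fin n) = (↑q : Fin n)
    · simp [hAdef, QS, hpq, Subtype.ext hpq]
    · have hqp : (↑q : Fin n) ≠ (↑p : Fin n) := fun h => hpq h.symm
      simp only [hAdef, QS, if_neg hpq, if_neg hqp, if_neg hp, if_neg hq, Qpath]
      by_cases h : ((↑(↑p : Fin n) : ℕ) + 1 = (↑(↑q : Fin n) : ℕ) ∨ (↑(↑q : Fin n) : ℕ) + 1 = (↑(↑p : Fin n) : ℕ))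
      · rw [if_pos h, if_pos (Or.symm h)]
      · rw [if_neg h, if_neg (fun h' => h (Or.symm h'))]
  have hherm : A.IsHermitian := by
    rw [Matrix.IsHermitian]
    ext p q
    rw [Matrix.conjTranspose_apply]
    simp [hsym p q]
  have hcompl : 0 < (Sᶜ : Finset (Fin n)).card := by
    rw [Finset.card_compl]
    simp only [Fintype.card_fin]
    omega
  obtain ⟨i0, hi0⟩ := Finset.card_pos.mp hcompl
  set p0 : ↥(Sᶜ) := ⟨i0, hi0⟩ with hp0
  set μ := hherm.eigenvalues p0 with hμ
  set v := hherm.eigenvectorBasis p0 with hv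
  have hmv := hherm.mulVec_eigenvectorBasis p0
  have hvne : (⇑v : ↥(Sᶜ) → ℝ) ≠ 0 := by
    intro h0; apply hherm.eigenvectorBasis.orthonormal.ne_zero p0; rw [← hv]; ext i; simp [h0]
  set x : Fin n → ℝ := fun i => if h : i ∈ Sᶜ then v ⟨i, h⟩ else 0 with hx
  have hxS : ∀ j ∈ S, x j = 0 := by
    intro j hj
    show (if h : j ∈ Sᶜ then v ⟨j, h⟩ else 0) = 0
    rw [dif_neg (by simp [hj])]
  have hxC : ∀ (j : Fin n) (h : j ∈ Sᶜ), x j = v ⟨j, h⟩ := by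
    intro j h
    show (if h : j ∈ Sᶜ then v ⟨j, h⟩ else 0) = v ⟨j, h⟩
    rw [dif_pos h]
  refine ⟨μ, x, ?_, ?_⟩
  · obtain ⟨p, hp⟩ := Function.ne_iff.mp hvne
    intro h0
    apply hp
    have h1 : x ↑p = 0 := by rw [h0]; rfl
    rw [hxC ↑p p.2] at h1
    simpa using h1
  · funext i
    by_cases hiS : i ∈ S
    · have hxi : x i = 0 := hxS i hiS
      have : ((QS (Qpath n) S).mulVec x) i = ∑ j, QS (Qpath n) S i j * x j := by
        simp [Matrix.mulVec, dotProduct]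
      rw [this]
      have hz : ∀ j, QS (Qpath n) S i j * x j = if j = i then -(∑ l, Qpath n i l) * x i else 0 := by
        intro j
        by_cases hji : j = i
        · subst hji; simp [QS]
        · rw [if_neg hji, QS, if_neg (fun h => hji h.symm), if_pos hiS, zero_mul]
      rw [Finset.sum_congr rfl (fun j _ => hz j), Finset.sum_ite_eq' univ i _]
      simp [hxi]
    · have hiC : i ∈ Sᶜ := Finset.mem_compl.mpr hiS
      have h1 : ((QS (Qpath n) S).mulVec x) i = ∑ j, QS (Qpath n) S i j * x j := by
        simp [Matrix.mulVec, dotProduct]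
      have h2 : (A.mulVec ⇑v) ⟨i, hiC⟩ = ∑ q : ↥(Sᶜ), QS (Qpath n) S i ↑q * v q := by
        simp [Matrix.mulVec, dotProduct, hAdef]
      have h3 : ∑ j, QS (Qpath n) S i j * x j = ∑ q : ↥(Sᶜ), QS (Qpath n) S i ↑q * x ↑q := by
        have hS0 : ∑ j ∈ S, QS (Qpath n) S i j * x j = 0 := by
          apply Finset.sum_eq_zero
          intro j hj
          rw [hxS j hj, mul_zero]
        rw [← Finset.sum_add_sum_compl S (fun j => QS (Qpath n) S i j * x j), hS0, zero_add,
          ← Finset.sum_coe_sort (Sᶜ) (fun j => QS (Qpath n) S i j * x j)]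
      have h4 : ∀ q : ↥(Sᶜ), x ↑q = v q := by
        intro q
        rw [hxC ↑q q.2]
      have h5 : ((QS (Qpath n) S).mulVec x) i = (A.mulVec ⇑v) ⟨i, hiC⟩ := by
        rw [h1, h2, h3]
        exact Finset.sum_congr rfl (fun q _ => by rw [h4 q])
      have h6 : (A.mulVec ⇑v) ⟨i, hiC⟩ = μ * v ⟨i, hiC⟩ := by
        rw [hmv]; simp; rfl
      rw [Pi.smul_apply, smul_eq_mul, h5, h6]
      congr 1
      exact (hxC i hiC).symm




lemma opt_card (n m : ℕ) (hmn : m ≤ n) :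
    (univ.filter (fun i : Fin n => m ≤ (i:ℕ))).card = n - m := by
  classical
  set S := univ.filter (fun i : Fin n => m ≤ (i:ℕ)) with hS
  have himg : S.image Fin.val = Finset.Ico m n := by
    ext l
    simp only [hS, Finset.mem_image, Finset.mem_filter, Finset.mem_univ, true_and, Finset.mem_Ico]
    constructor
    · rintro ⟨a, ha, rfl⟩; exact ⟨ha, a.isLt⟩
    · rintro ⟨h1, h2⟩; exact ⟨⟨l, h2⟩, h1, rfl⟩
  have := Finset.card_image_of_injective S Fin.val_injective
  rw [himg, Nat.card_Ico] at this
  omega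

lemma opt_eigvec (n : ℕ) (hn : 2 ≤ n) (m : ℕ) (hm1 : 1 ≤ m) (hmn : m < n) :
    ∃ x : Fin n → ℝ, x ≠ 0 ∧
      (QS (Qpath n) (univ.filter (fun i : Fin n => m ≤ (i:ℕ)))).mulVec x = (-(cst m)) • x := by
  classical
  set θ := Real.pi / (2 * m + 1) with hθ
  have hθpos : 0 < θ := by rw [hθ]; positivity
  have hθle : θ ≤ Real.pi / 3 := by
    rw [hθ]
    apply div_le_div_of_nonneg_left Real.pi_pos.le (by norm_num)
    have : (1:ℝ) ≤ (m:ℝ) := by exact_mod_cast hm1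
    linarith
  have hhalf : ((m:ℝ) + 1/2) * θ = Real.pi / 2 := by rw [hθ]; field_simp
  have hrec : ∀ a : ℝ, Real.cos (a - θ) + Real.cos (a + θ) = 2 * Real.cos θ * Real.cos a := by
    intro a; rw [Real.cos_sub, Real.cos_add]; ring
  have hcm : -(cst m) = 2 * Real.cos θ - 2 := by rw [cst, hθ]; ring
  set S := univ.filter (fun i : Fin n => m ≤ (i:ℕ)) with hS
  set x : Fin n → ℝ := fun i => if (i:ℕ) < m then Real.cos ((((i:ℕ):ℝ)+1/2)*θ) else 0 with hx
  have hxval : ∀ i : Fin n, (i:ℕ) < m → x i = Real.cos ((((i:ℕ):ℝ)+1/2)*θ) := by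
    intro i hi
    show (if (i:ℕ) < m then Real.cos ((((i:ℕ):ℝ)+1/2)*θ) else 0) = _
    rw [if_pos hi]
  have hxzero : ∀ i : Fin n, m ≤ (i:ℕ) → x i = 0 := by
    intro i hi
    show (if (i:ℕ) < m then Real.cos ((((i:ℕ):ℝ)+1/2)*θ) else 0) = 0
    rw [if_neg (by omega)]
  refine ⟨x, ?_, ?_⟩
  · intro h0
    have h1 : x ⟨0, by omega⟩ = 0 := by rw [h0]; rfl
    rw [hxval _ (by simp; omega)] at h1
    have : 0 < Real.cos (((((⟨0, by omega⟩ : Fin n):ℕ):ℝ)+1/2)*θ) := by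
      apply Real.cos_pos_of_mem_Ioo
      constructor
      · have := Real.pi_pos; simp; nlinarith
      · simp only [Fin.val_mk, Nat.cast_zero]
        nlinarith [Real.pi_pos]
    linarith
  · funext i
    rw [QS_row]
    by_cases hiS : i ∈ S
    · rw [if_pos hiS]
      have hmi : m ≤ (i:ℕ) := by
        have := Finset.mem_filter.mp hiS
        exact this.2
      rw [Pi.smul_apply, smul_eq_mul, hxzero i hmi]
      simp
    · have him : (i:ℕ) < m := by
        have : ¬ (m ≤ (i:ℕ)) := fun h => hiS (Finset.mem_filter.mpr ⟨mem_univ i, h⟩)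
        omega
      rw [if_neg hiS, qpath_deg]
      have hi1n : (i:ℕ) + 1 < n := by omega
      rw [if_pos hi1n]
      have hnext : extv x ((i:ℕ)+1) = Real.cos ((((i:ℕ):ℝ)+3/2)*θ) := by
        have h1 : (i:ℕ)+1 < n := hi1n
        show (if h : (i:ℕ)+1 < n then x ⟨(i:ℕ)+1, h⟩ else 0) = _
        rw [dif_pos h1]
        by_cases h2 : (i:ℕ)+1 < m
        · rw [hxval _ (by simpa using h2)]
          congr 1
          push_cast
          ring
        · have h3 : (i:ℕ)+1 = m := by omega
          rw [hxzero _ (by simp [h3])]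
          rw [show (((i:ℕ):ℝ)+3/2)*θ = (((m:ℝ)+1/2))*θ by
            rw [show (m:ℝ) = ((i:ℕ):ℝ)+1 by exact_mod_cast congrArg (Nat.cast : ℕ → ℝ) h3.symm]
            ring, hhalf, Real.cos_pi_div_two]
      rw [hnext, hxval i him]
      by_cases h0 : 0 < (i:ℕ)
      · rw [if_pos h0, if_pos h0]
        have hprev : extv x ((i:ℕ)-1) = Real.cos ((((i:ℕ):ℝ)-1/2)*θ) := by
          have h1 : (i:ℕ)-1 < n := by omega
          show (if h : (i:ℕ)-1 < n then x ⟨(i:ℕ)-1, h⟩ else 0) = _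
          rw [dif_pos h1, hxval _ (by simp; omega)]
          congr 1
          have : (((i:ℕ)-1 : ℕ):ℝ) = ((i:ℕ):ℝ) - 1 := by
            have : 1 ≤ (i:ℕ) := h0
            push_cast [Nat.cast_sub this]
            ring
          rw [Fin.val_mk, this]
          ring
        rw [hprev]
        have := hrec ((((i:ℕ):ℝ)+1/2)*θ)
        rw [show (((i:ℕ):ℝ)+1/2)*θ - θ = (((i:ℕ):ℝ)-1/2)*θ by ring,
            show (((i:ℕ):ℝ)+1/2)*θ + θ = (((i:ℕ):ℝ)+3/2)*θ by ring] at this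
        rw [Pi.smul_apply, smul_eq_mul, hxval i him, hcm]
        linarith
      · rw [if_neg h0, if_neg h0]
        have hi0 : ((i:ℕ):ℝ) = 0 := by
          have : (i:ℕ) = 0 := by omega
          exact_mod_cast this
        rw [Pi.smul_apply, smul_eq_mul, hxval i him, hcm, hi0]
        have hid := hrec (((0:ℝ)+1/2)*θ)
        rw [show ((0:ℝ)+1/2)*θ - θ = -(((0:ℝ)+1/2)*θ) by ring, Real.cos_neg,
            show ((0:ℝ)+1/2)*θ + θ = ((0:ℝ)+3/2)*θ by ring] at hid
        linarith


theorem stmt11 (n : ℕ) (hn : 2 ≤ n) :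
    (∀ k : ℕ, 1 ≤ k → k < n →
      IsGreatest {x : ℝ | ∃ S : Finset (Fin n), S.card = k ∧ x = lambdaMax (QS (Qpath n) S)}
        (-2 * (1 - Real.cos (Real.pi / (2 * ((n : ℝ) - k) + 1))))) ∧
    (∀ α : ℝ, 1/2 < α → α < 1 → ∀ k : ℕ, (k : ℝ) = (2*α - 1) * n →
      IsLeast {x : ℝ | ∃ S : Finset (Fin n), S.card = k ∧ x = |lambdaMax (QS (Qpath n) S)|}
        (2 * (1 - Real.cos (Real.pi / (4 * (1 - α) * n + 1))))) := by
  have part1 : ∀ k : ℕ, 1 ≤ k → k < n →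
      IsGreatest {x : ℝ | ∃ S : Finset (Fin n), S.card = k ∧ x = lambdaMax (QS (Qpath n) S)}
        (-2 * (1 - Real.cos (Real.pi / (2 * ((n : ℝ) - k) + 1)))) := by
    intro k hk1 hkn
    have hm1 : 1 ≤ n - k := by omega
    have hmn : n - k < n := by omega
    have hval : -2 * (1 - Real.cos (Real.pi / (2 * ((n : ℝ) - k) + 1))) = -(cst (n - k)) := by
      rw [cst]
      have hc : ((n - k : ℕ) : ℝ) = (n : ℝ) - k := by
        push_cast [Nat.cast_sub hkn.le]
        ring
      rw [hc]
      ring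
    rw [hval]
    have hScard : (univ.filter (fun i : Fin n => n - k ≤ (i:ℕ))).card = k := by
      rw [opt_card n (n-k) hmn.le]
      omega
    have hGreat : IsGreatest {μ : ℝ | ∃ x : Fin n → ℝ, x ≠ 0 ∧
        (QS (Qpath n) (univ.filter (fun i : Fin n => n - k ≤ (i:ℕ)))).mulVec x = μ • x}
        (-(cst (n - k))) := by
      constructor
      · exact opt_eigvec n hn (n-k) hm1 hmn
      · intro μ hμ
        have h := eig_le n hn _ (by omega : 1 ≤ (univ.filter (fun i : Fin n => n - k ≤ (i:ℕ))).card)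
          (by omega) μ hμ
        rwa [hScard] at h
    constructor
    · refine ⟨univ.filter (fun i : Fin n => n - k ≤ (i:ℕ)), hScard, ?_⟩
      simp only [lambdaMax]
      exact hGreat.csSup_eq.symm
    · rintro y ⟨S, hSc, rfl⟩
      simp only [lambdaMax]
      apply csSup_le (eig_nonempty n S (by omega))
      intro μ hμ
      have h := eig_le n hn S (by omega) (by omega) μ hμ
      rwa [hSc] at h
  refine ⟨part1, ?_⟩
  intro α hα1 hα2 k hkα
  have hn2 : (2:ℝ) ≤ (n:ℝ) := by exact_mod_cast hn
  have hk1 : 1 ≤ k := by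
    have h0 : (0:ℝ) < (k:ℝ) := by rw [hkα]; nlinarith
    have : 0 < k := by exact_mod_cast h0
    omega
  have hkn : k < n := by
    have h0 : (k:ℝ) < (n:ℝ) := by rw [hkα]; nlinarith
    exact_mod_cast h0
  have hg := part1 k hk1 hkn
  have hval : -2 * (1 - Real.cos (Real.pi / (2 * ((n : ℝ) - k) + 1))) = -(cst (n - k)) := by
    rw [cst]
    have hc : ((n - k : ℕ) : ℝ) = (n : ℝ) - k := by
      push_cast [Nat.cast_sub hkn.le]
      ring
    rw [hc]
    ring
  have hval2 : 2 * (1 - Real.cos (Real.pi / (4 * (1 - α) * n + 1))) = cst (n - k) := by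
    rw [cst]
    have hc : ((n - k : ℕ) : ℝ) = (n : ℝ) - k := by
      push_cast [Nat.cast_sub hkn.le]
      ring
    have he : 4 * (1 - α) * (n:ℝ) + 1 = 2 * ((n - k : ℕ) : ℝ) + 1 := by
      rw [hc, hkα]
      ring
    rw [he]
  constructor
  · obtain ⟨S0, hS0c, hS0v⟩ := hg.1
    refine ⟨S0, hS0c, ?_⟩
    rw [← hS0v, hval, hval2, abs_neg, abs_of_nonneg (cst_nonneg _)]
  · rintro y ⟨S, hSc, rfl⟩
    have hle : lambdaMax (QS (Qpath n) S) ≤ -(cst (n - k)) := by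
      rw [← hval]
      exact hg.2 ⟨S, hSc, rfl⟩
    rw [hval2]
    have habs := neg_le_abs (lambdaMax (QS (Qpath n) S))
    linarith
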